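/- Let Ω be a d-dimensional cycle and v a vertex of Ω. If F_1, ..., F_k are the d-faces of Ω containing v, then each (d-1)-path-connected component of the complex generated by F_1 \ {v}, ..., F_k \ {v} is a (d-1)-dimensional cycle. -/

import Mathlib

namespace ConnonFaridi

open Finset
open scoped Classical

noncomputable section

variable {V : Type*} [Fintype V] [DecidableEq V]

/-- An abstract simplicial complex on vertex type `V`: a family of faces closed under subsets. -/
def IsComplex (K : Finset (Finset V)) : Prop :=
  ∀ F ∈ K, ∀ F' ⊆ F, F' ∈ K

/-- The vertex set of a complex. -/
def verts (K : Finset (Finset V)) : Finset V := K.sup id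

/-- `K` is pure of dimension `n`: every face is contained in a face of dimension `n`. -/
def IsPureDim (n : ℕ) (K : Finset (Finset V)) : Prop :=
  ∀ F ∈ K, ∃ G ∈ K, F ⊆ G ∧ G.card = n + 1

/-- The pure d-skeleton: the complex generated by (downward closure of) the d-faces of `K`. -/
def skeleton (d : ℕ) (K : Finset (Finset V)) : Finset (Finset V) :=
  (K.filter fun G => G.card = d + 1).biUnion Finset.powerset

/-- The d-closure of a (pure d-dimensional) complex `K`, relative to the vertex set `W`:
faces are all subsets of `W` of size at most `d`, together with those subsets all of whose
(d+1)-element subsets are faces of `K`. -/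
def closureOn (W : Finset V) (d : ℕ) (K : Finset (Finset V)) : Finset (Finset V) :=
  W.powerset.filter fun S => S.card ≤ d ∨ ∀ T ⊆ S, T.card = d + 1 → T ∈ K

/-- The d-closure `Δ_d(K)` on the vertex set of `K`. -/
def closure (d : ℕ) (K : Finset (Finset V)) : Finset (Finset V) :=
  closureOn (verts K) d K

/-- The induced subcomplex of `K` on the vertex set `W`. -/
def induced (K : Finset (Finset V)) (W : Finset V) : Finset (Finset V) :=
  K.filter fun F => F ⊆ W

/-- The Z/2 simplicial boundary of a chain, encoded as the finset of faces with coefficient 1: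
the boundary consists of those sets which are codimension-one subsets of an odd number of
members of the chain. (For a chain of vertices this is the reduced/augmented boundary.) -/
def bdry (c : Finset (Finset V)) : Finset (Finset V) :=
  (c.biUnion Finset.powerset).filter fun T =>
    Odd ((c.filter fun F => T ⊆ F ∧ T.card + 1 = F.card).card)

/-- Two d-faces of the family `c` are adjacent if they intersect in a (d-1)-face. -/
def adjOn (d : ℕ) (c : Finset (Finset V)) (A B : Finset V) : Prop :=
  A ∈ c ∧ B ∈ c ∧ (A ∩ B).card = d

/-- A d-dimensional cycle, recorded by its set `Ω` of d-faces: a nonempty pure d-dimensional,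
d-path-connected complex in which every (d-1)-face lies in an even number of d-faces. -/
def IsCycleFaces (d : ℕ) (Ω : Finset (Finset V)) : Prop :=
  Ω.Nonempty ∧ (∀ F ∈ Ω, F.card = d + 1) ∧
    (∀ F ∈ Ω, ∀ G ∈ Ω, Relation.ReflTransGen (adjOn d Ω) F G) ∧
    ∀ T : Finset V, T.card = d → Even ((Ω.filter fun F => T ⊆ F).card)

/-- A d-dimensional cycle is face-minimal if no proper subset of its d-faces is a
d-dimensional cycle. -/
def FaceMinimal (d : ℕ) (Ω : Finset (Finset V)) : Prop :=
  ∀ Ω' ⊂ Ω, ¬ IsCycleFaces d Ω'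

/-- The complex generated by `Ω` is j-complete: it contains all j-faces on its vertex set. -/
def CompleteOn (j : ℕ) (Ω : Finset (Finset V)) : Prop :=
  ∀ S ⊆ verts Ω, S.card = j + 1 → ∃ F ∈ Ω, S ⊆ F

/-- `C` is a chord set of the d-dimensional cycle `Ω` in the complex `Γ` (Connon–Faridi). -/
def IsChordSet (d : ℕ) (Γ Ω C : Finset (Finset V)) : Prop :=
  (∀ F ∈ C, F ∈ Γ ∧ F.card = d + 1 ∧ F ∉ Ω) ∧
  ∃ L : List (Finset (Finset V)), 2 ≤ L.length ∧
    (∀ Ωi ∈ L, IsCycleFaces d Ωi ∧ (∀ F ∈ Ωi, F ∈ C ∪ Ω) ∧ (verts Ωi).card < (verts Ω).card) ∧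
    (∀ F ∈ C ∪ Ω, ∃ Ωi ∈ L, F ∈ Ωi) ∧
    (∀ F ∈ C, Even (L.countP fun Ωi => decide (F ∈ Ωi))) ∧
    (∀ F ∈ Ω, Odd (L.countP fun Ωi => decide (F ∈ Ωi)))

/-- `Γ` is d-chorded: it is pure of dimension `d ≥ 1` and every face-minimal, non-d-complete
d-dimensional cycle in `Γ` has a chord set in `Γ`. -/
def IsChorded (d : ℕ) (Γ : Finset (Finset V)) : Prop :=
  1 ≤ d ∧ IsPureDim d Γ ∧
    ∀ Ω ⊆ Γ, IsCycleFaces d Ω → FaceMinimal d Ω → ¬ CompleteOn d Ω →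
      ∃ C, IsChordSet d Γ Ω C

/-- The reduced simplicial homology of `K` over Z/2 vanishes in dimension `i`:
every homological i-cycle is an i-boundary. -/
def HVanishes (K : Finset (Finset V)) (i : ℕ) : Prop :=
  ∀ c : Finset (Finset V), (∀ F ∈ c, F ∈ K ∧ F.card = i + 1) → bdry c = ∅ →
    ∃ c' : Finset (Finset V), (∀ F ∈ c', F ∈ K ∧ F.card = i + 2) ∧ bdry c' = c

/-- The Stanley–Reisner complex of the square-free monomial ideal generated by the
sets (monomials) in `𝒢`: faces are the sets containing no generator. -/
def stanleyReisner (𝒢 : Finset (Finset V)) : Finset (Finset V) :=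
  Finset.univ.powerset.filter fun S => ∀ G ∈ 𝒢, ¬ G ⊆ S

/-- The facet complex of the square-free monomial ideal generated by `𝒢`. -/
def facetCx (𝒢 : Finset (Finset V)) : Finset (Finset V) :=
  Finset.univ.powerset.filter fun S => ∃ G ∈ 𝒢, S ⊆ G

/-- The d-complement of `K`: the complex whose facets are the (d+1)-element sets
that are not faces of `K`. -/
def dComplement (d : ℕ) (K : Finset (Finset V)) : Finset (Finset V) :=
  Finset.univ.powerset.filter fun S => ∃ T, S ⊆ T ∧ T.card = d + 1 ∧ T ∉ K

/-- The ideal generated by the square-free degree-(d+1) monomials `𝒢` has a (d+1)-linear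
resolution over a field of characteristic 2.  (Formalized via Fröberg's criterion, which over a
field of characteristic 2 amounts to the vanishing of the reduced Z/2 homology of all induced
subcomplexes of the Stanley–Reisner complex in every dimension `i ≠ (d+1) - 2`.) -/
def HasLinRes (d : ℕ) (𝒢 : Finset (Finset V)) : Prop :=
  ∀ (W : Finset V) (i : ℕ), i ≠ d - 1 → HVanishes (induced (stanleyReisner 𝒢) W) i

/-- A graph is chordal if every cycle of length at least 4 has a chord. -/
def IsChordalGraph (G : SimpleGraph V) : Prop :=
  ∀ (v : V) (p : G.Walk v v), p.IsCycle → 4 ≤ p.length →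
    ∃ u w, u ∈ p.support ∧ w ∈ p.support ∧ G.Adj u w ∧ s(u, w) ∉ p.edges

/-- The clique complex of a graph. -/
def cliqueCx (G : SimpleGraph V) : Finset (Finset V) :=
  Finset.univ.powerset.filter fun S => G.IsClique (S : Set V)

/-- A graph viewed as a pure 1-dimensional simplicial complex (faces: subsets of edges). -/
def graphCx (G : SimpleGraph V) : Finset (Finset V) :=
  Finset.univ.powerset.filter fun S => ∃ u v, G.Adj u v ∧ S ⊆ ({u, v} : Finset V)

/-- The generating set of the edge ideal of a graph: its edges as 2-element sets. -/
def edgeGens (G : SimpleGraph V) : Finset (Finset V) :=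
  Finset.univ.powerset.filter fun S => ∃ u v, G.Adj u v ∧ S = {u, v}

/-- Let Ω be a d-dimensional cycle, v a vertex of Ω, and F₁,...,F_k the d-faces
of Ω containing v.  Then each (d-1)-path-connected component of the complex generated by
F₁ \ {v},...,F_k \ {v} is a (d-1)-dimensional cycle. -/
theorem stmt7 (d : ℕ) (hd : 1 ≤ d) (Ω : Finset (Finset V)) (hΩ : IsCycleFaces d Ω)
    (v : V) (hv : v ∈ verts Ω)
    (E : Finset (Finset V)) (hE : E = (Ω.filter fun F => v ∈ F).image fun F => F.erase v) :
    ∀ F ∈ E,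
      IsCycleFaces (d - 1) (E.filter fun G => Relation.ReflTransGen (adjOn (d - 1) E) F G) := by
  intro F hF
  set R := Relation.ReflTransGen (adjOn (d - 1) E) with hR
  set C := E.filter fun G => R F G with hCdef
  -- basic facts about E
  have hEcard : ∀ G ∈ E, G.card = d := by
    intro G hG
    rw [hE, Finset.mem_image] at hG
    obtain ⟨A, hA, rfl⟩ := hG
    rw [Finset.mem_filter] at hA
    rw [Finset.card_erase_of_mem hA.2, hΩ.2.1 A hA.1]
    simp
  have hEv : ∀ G ∈ E, v ∉ G := by
    intro G hG
    rw [hE, Finset.mem_image] at hG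
    obtain ⟨A, hA, rfl⟩ := hG
    exact Finset.notMem_erase v A
  -- adjacency of two distinct E-faces sharing a (d-1)-subset
  have hadj : ∀ T : Finset V, T.card = d - 1 → ∀ A ∈ E, ∀ B ∈ E, T ⊆ A → T ⊆ B → A ≠ B →
      adjOn (d - 1) E A B := by
    intro T hT A hA B hB hTA hTB hne
    refine ⟨hA, hB, ?_⟩
    have h1 : T ⊆ A ∩ B := Finset.subset_inter hTA hTB
    have h2 : d - 1 ≤ (A ∩ B).card := hT ▸ Finset.card_le_card h1
    have h3 : (A ∩ B).card ≤ A.card := Finset.card_le_card Finset.inter_subset_left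
    have h4 : (A ∩ B).card ≠ d := by
      intro hcd
      have : A ∩ B = A := Finset.eq_of_subset_of_card_le Finset.inter_subset_left
        (by rw [hEcard A hA, hcd])
      have hAB : A ⊆ B := by rw [← this]; exact Finset.inter_subset_right
      exact hne (Finset.eq_of_subset_of_card_le hAB
        (by rw [hEcard A hA, hEcard B hB]))
    rw [hEcard A hA] at h3
    omega
  have hCsubE : C ⊆ E := Finset.filter_subset _ _
  have hFC : F ∈ C := Finset.mem_filter.mpr ⟨hF, Relation.ReflTransGen.refl⟩
  have hmemC : ∀ G, G ∈ C ↔ G ∈ E ∧ R F G := fun G => Finset.mem_filter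
  -- connectivity lemma: paths from F in E can be realized in C
  have hpath : ∀ Y, R F Y → Relation.ReflTransGen (adjOn (d - 1) C) F Y := by
    intro Y hY
    induction hY with
    | refl => exact Relation.ReflTransGen.refl
    | tail hXY hadjstep ih =>
      rename_i X Z
      refine Relation.ReflTransGen.tail ih ?_
      have hXC : X ∈ C := (hmemC X).mpr ⟨hadjstep.1, hXY⟩
      have hZC : Z ∈ C := (hmemC Z).mpr ⟨hadjstep.2.1, hXY.tail hadjstep⟩
      exact ⟨hXC, hZC, hadjstep.2.2⟩
  have hsymmC : ∀ A B, adjOn (d - 1) C A B → adjOn (d - 1) C B A := by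
    intro A B ⟨h1, h2, h3⟩
    exact ⟨h2, h1, by rwa [Finset.inter_comm]⟩
  refine ⟨⟨F, hFC⟩, ?_, ?_, ?_⟩
  · intro G hG
    have := hEcard G (hCsubE hG)
    omega
  · intro G hG H hH
    have hG' := (hmemC G).mp hG
    have hH' := (hmemC H).mp hH
    have p1 : Relation.ReflTransGen (adjOn (d - 1) C) G F :=
      by haveI : Std.Symm (adjOn (d - 1) C) := ⟨fun a b h => hsymmC a b h⟩
         exact Relation.ReflTransGen.symmetric.symm _ _ (hpath G hG'.2)
    exact p1.trans (hpath H hH'.2)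
  · intro T hT
    by_cases hvT : v ∈ T
    · have : C.filter (fun G => T ⊆ G) = ∅ := by
        rw [Finset.filter_eq_empty_iff]
        intro G hG hTG
        exact hEv G (hCsubE hG) (hTG hvT)
      rw [this]
      simp
    · -- count in E equals count in Ω of faces containing insert v T
      have hEcount : (E.filter fun G => T ⊆ G) =
          (Ω.filter fun A => insert v T ⊆ A).image (fun A => A.erase v) := by
        ext G
        simp only [Finset.mem_filter, Finset.mem_image]
        constructor
        · rintro ⟨hGE, hTG⟩
          rw [hE, Finset.mem_image] at hGE
          obtain ⟨A, hA, rfl⟩ := hGE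
          rw [Finset.mem_filter] at hA
          refine ⟨A, ⟨hA.1, ?_⟩, rfl⟩
          rw [Finset.insert_subset_iff]
          exact ⟨hA.2, hTG.trans (Finset.erase_subset v A)⟩
        · rintro ⟨A, ⟨hAΩ, hAsub⟩, rfl⟩
          have hvA : v ∈ A := hAsub (Finset.mem_insert_self v T)
          constructor
          · rw [hE, Finset.mem_image]
            exact ⟨A, Finset.mem_filter.mpr ⟨hAΩ, hvA⟩, rfl⟩
          · intro x hx
            exact Finset.mem_erase.mpr ⟨fun h => hvT (h ▸ hx),
              hAsub (Finset.mem_insert_of_mem hx)⟩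
      have hinj : ((Ω.filter fun A => insert v T ⊆ A).image (fun A => A.erase v)).card =
          (Ω.filter fun A => insert v T ⊆ A).card := by
        apply Finset.card_image_of_injOn
        intro A hA B hB hAB
        rw [Finset.mem_coe, Finset.mem_filter] at hA hB
        have hvA : v ∈ A := hA.2 (Finset.mem_insert_self v T)
        have hvB : v ∈ B := hB.2 (Finset.mem_insert_self v T)
        rw [← Finset.insert_erase hvA, ← Finset.insert_erase hvB]
        exact congrArg (insert v) hAB
      have hEvenE : Even ((E.filter fun G => T ⊆ G).card) := by
        rw [hEcount, hinj]
        exact hΩ.2.2.2 (insert v T) (by rw [Finset.card_insert_of_notMem hvT, hT]; omega)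
      -- either no face of C contains T, or all E-faces containing T lie in C
      by_cases hex : ∃ G ∈ C, T ⊆ G
      · obtain ⟨G0, hG0C, hTG0⟩ := hex
        have : C.filter (fun G => T ⊆ G) = E.filter (fun G => T ⊆ G) := by
          ext H
          simp only [Finset.mem_filter]
          constructor
          · rintro ⟨hHC, hTH⟩
            exact ⟨hCsubE hHC, hTH⟩
          · rintro ⟨hHE, hTH⟩
            refine ⟨?_, hTH⟩
            by_cases hHG0 : H = G0
            · exact hHG0 ▸ hG0C
            · have hstep := hadj T hT G0 (hCsubE hG0C) H hHE hTG0 hTH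
                (fun h => hHG0 h.symm)
              exact (hmemC H).mpr ⟨hHE, ((hmemC G0).mp hG0C).2.tail hstep⟩
        rw [this]
        exact hEvenE
      · have : C.filter (fun G => T ⊆ G) = ∅ := by
          rw [Finset.filter_eq_empty_iff]
          intro G hG hTG
          exact hex ⟨G, hG, hTG⟩
        rw [this]
        simp

end

end ConnonFaridi
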